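/- Let T_h > T_c > 0 and 0 < δ_min < δ_max, and define f(x) = (1 + e^{−x}) exp(x/(1 + e^x)) and μ(δ_a, δ_c) = (T_h − T_c)(ln f(δ_a/T_h) − ln f(δ_c/T_c)). Then for all δ_a, δ_c ∈ [δ_min, δ_max], μ(δ_max, δ_min) ≤ μ(δ_a, δ_c); that is, the Carnot cycle maximizing the average work output (minimizing μ, which is negative in the work-output convention) is the one with δ_a = δ_max and δ_c = δ_min. -/

import Mathlib

open Set

private noncomputable def g17 (x : ℝ) : ℝ :=
  Real.log (1 + Real.exp (-x)) + x / (1 + Real.exp x)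

private lemma g17_hasDerivAt (x : ℝ) :
    HasDerivAt g17 (-x * Real.exp x / (1 + Real.exp x) ^ 2) x := by
  have hpos : (0:ℝ) < 1 + Real.exp x := by positivity
  have hposn : (0:ℝ) < 1 + Real.exp (-x) := by positivity
  have h1 : HasDerivAt (fun x : ℝ => 1 + Real.exp (-x)) (-Real.exp (-x)) x := by
    have := (Real.hasDerivAt_exp (-x)).comp x (hasDerivAt_neg x)
    simpa using this.const_add 1
  have h2 : HasDerivAt (fun x : ℝ => Real.log (1 + Real.exp (-x)))
      (-Real.exp (-x) / (1 + Real.exp (-x))) x := h1.log hposn.ne'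
  have h3 : HasDerivAt (fun x : ℝ => 1 + Real.exp x) (Real.exp x) x := by
    simpa using (Real.hasDerivAt_exp x).const_add 1
  have h4 : HasDerivAt (fun x : ℝ => x / (1 + Real.exp x))
      ((1 * (1 + Real.exp x) - x * Real.exp x) / (1 + Real.exp x) ^ 2) x :=
    (hasDerivAt_id x).div h3 hpos.ne'
  have h5 : HasDerivAt g17
      (-Real.exp (-x) / (1 + Real.exp (-x)) +
        (1 * (1 + Real.exp x) - x * Real.exp x) / (1 + Real.exp x) ^ 2) x := h2.add h4
  convert h5 using 1
  have hne : Real.exp x ≠ 0 := (Real.exp_pos x).ne'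
  rw [Real.exp_neg]
  field_simp
  ring

private lemma g17_anti : AntitoneOn g17 (Ici 0) := by
  apply antitoneOn_of_deriv_nonpos (convex_Ici 0)
  · exact fun x _ => (g17_hasDerivAt x).differentiableAt.continuousAt.continuousWithinAt
  · intro x _
    exact (g17_hasDerivAt x).differentiableAt.differentiableWithinAt
  · intro x hx
    rw [interior_Ici] at hx
    rw [(g17_hasDerivAt x).deriv]
    have : (0:ℝ) < x := hx
    have h1 : (0:ℝ) < Real.exp x := Real.exp_pos x
    have h2 : (0:ℝ) < (1 + Real.exp x) ^ 2 := by positivity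
    apply div_nonpos_of_nonpos_of_nonneg _ h2.le
    nlinarith

theorem stmt17 (Th Tc δmin δmax : ℝ)
    (hTh : Tc < Th) (hTc : 0 < Tc) (hmin : 0 < δmin) (hlt : δmin < δmax)
    (f : ℝ → ℝ)
    (hf : ∀ x, f x = (1 + Real.exp (-x)) * Real.exp (x / (1 + Real.exp x)))
    (μ : ℝ → ℝ → ℝ)
    (hμ : ∀ δa δc, μ δa δc =
      (Th - Tc) * (Real.log (f (δa / Th)) - Real.log (f (δc / Tc)))) :
    ∀ δa ∈ Icc δmin δmax, ∀ δc ∈ Icc δmin δmax, μ δmax δmin ≤ μ δa δc := by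
  have hTh0 : (0:ℝ) < Th := hTc.trans hTh
  have hlog : ∀ x : ℝ, Real.log (f x) = g17 x := by
    intro x
    have hposn : (0:ℝ) < 1 + Real.exp (-x) := by positivity
    rw [hf, Real.log_mul hposn.ne' (Real.exp_pos _).ne', Real.log_exp, g17]
  intro δa ha δc hc
  have hδa : 0 < δa := hmin.trans_le ha.1
  have hδc : 0 < δc := hmin.trans_le hc.1
  have hδmax : 0 < δmax := hmin.trans hlt
  rw [hμ, hμ, hlog, hlog, hlog, hlog]
  have hsub : g17 (δmax / Th) - g17 (δmin / Tc) ≤ g17 (δa / Th) - g17 (δc / Tc) := by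
    have h1 : g17 (δmax / Th) ≤ g17 (δa / Th) := by
      apply g17_anti (le_of_lt (by positivity) : (0:ℝ) ≤ δa / Th)
        (le_of_lt (by positivity : (0:ℝ) < δmax / Th))
      gcongr
      exact ha.2
    have h2 : g17 (δc / Tc) ≤ g17 (δmin / Tc) := by
      apply g17_anti (le_of_lt (by positivity) : (0:ℝ) ≤ δmin / Tc)
        (le_of_lt (by positivity : (0:ℝ) < δc / Tc))
      gcongr
      exact hc.1
    linarith
  have : (0:ℝ) ≤ Th - Tc := by linarith
  exact mul_le_mul_of_nonneg_left hsub this
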